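/- Let d ≥ 2 and let g be an invertible real d×d matrix. Define h(t) = (|g t|^d / |t|^d)(1 + |g t|²)^{−d/2} − (1 + |t|²)^{−d/2} for t ∈ ℝ^d, t ≠ 0. Then |h(t)| = O(|t|^{−d−2}) as |t| → ∞ (i.e. there exist constants C and R with |h(t)| ≤ C |t|^{−d−2} whenever |t| ≥ R), and consequently h ∈ ℓ₁(L∞)(ℝ^d), i.e. Σ_{n ∈ ℤ^d} ess sup_{t ∈ n+[0,1]^d} |h(t)| < ∞. -/

import Mathlib

open MeasureTheory Finset

private lemma bern16 {p x : ℝ} (hp : 1 ≤ p) (hx : 0 ≤ x) :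
    1 - (1 + x) ^ (-p) ≤ p * x := by
  have h1 : (0:ℝ) < 1 + x := by linarith
  have hinv0 : 0 ≤ (1+x)⁻¹ := by positivity
  have hs : (-1:ℝ) ≤ (1 + x)⁻¹ - 1 := by linarith
  have hb := one_add_mul_self_le_rpow_one_add hs hp
  have he : (1 + ((1 + x)⁻¹ - 1)) = (1+x)⁻¹ := by ring
  rw [he, ← Real.rpow_neg_one (1+x), ← Real.rpow_mul h1.le, neg_one_mul,
    Real.rpow_neg_one] at hb
  have hiv : (1+x) * (1+x)⁻¹ = 1 := mul_inv_cancel₀ h1.ne'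
  nlinarith [hb, hiv, mul_nonneg hx hx, mul_nonneg (mul_nonneg (by linarith : (0:ℝ) ≤ p) hx) hx]

private lemma diff_bound16 {p x y : ℝ} (hp : 1 ≤ p) (hx : 0 ≤ x) (hy : 0 ≤ y) :
    |(1 + x) ^ (-p) - (1 + y) ^ (-p)| ≤ p * (x + y) := by
  have hp0 : (0:ℝ) ≤ p := by linarith
  have hx1 := Real.rpow_le_one_of_one_le_of_nonpos (by linarith : (1:ℝ) ≤ 1+x)
      (by linarith : -p ≤ 0)
  have hy1 := Real.rpow_le_one_of_one_le_of_nonpos (by linarith : (1:ℝ) ≤ 1+y)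
      (by linarith : -p ≤ 0)
  have h2 := bern16 hp hx
  have h3 := bern16 hp hy
  have hmx : 0 ≤ p * x := mul_nonneg hp0 hx
  have hmy : 0 ≤ p * y := mul_nonneg hp0 hy
  rw [abs_sub_le_iff]
  constructor <;> linarith

private lemma key_id16 {d : ℕ} {a : ℝ} (ha : 0 < a) :
    a ^ d * (1 + a ^ 2) ^ (-(d:ℝ)/2) = (1 + a⁻¹ ^ 2) ^ (-(d:ℝ)/2) := by
  have h1 : (0:ℝ) < 1 + a^2 := by positivity
  have h2 : (1 + a⁻¹ ^ 2) = (1 + a^2) * (a^2)⁻¹ := by field_simp; ring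
  have h3 : ((a^2)⁻¹ : ℝ) ^ (-(d:ℝ)/2) = a ^ d := by
    rw [← Real.rpow_natCast a 2, ← Real.rpow_neg ha.le, ← Real.rpow_mul ha.le]
    rw [show (-((2:ℕ):ℝ)) * (-(d:ℝ)/2) = (d:ℝ) by push_cast; ring, Real.rpow_natCast]
  rw [h2, Real.mul_rpow h1.le (by positivity), h3]
  ring

private lemma core16 {d : ℕ} (hd : 2 ≤ d) {a b : ℝ} (ha : 0 < a) (hb : 0 < b) :
    |a ^ d / b ^ d * (1 + a ^ 2) ^ (-(d : ℝ)/2) - (1 + b ^ 2) ^ (-(d:ℝ)/2)|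
      ≤ ((d:ℝ)/2) * (a⁻¹ ^ 2 + b⁻¹ ^ 2) * b ^ (-(d:ℝ)) := by
  have hbd : (0:ℝ) < b ^ d := by positivity
  have hbr : b ^ (-(d:ℝ)) = (b ^ d)⁻¹ := by
    rw [← Real.rpow_natCast b d, ← Real.rpow_neg hb.le]
  have e1 : a ^ d / b ^ d * (1 + a ^ 2) ^ (-(d:ℝ)/2)
      = b ^ (-(d:ℝ)) * (1 + a⁻¹ ^ 2) ^ (-(d:ℝ)/2) := by
    rw [hbr, ← key_id16 ha]; ring
  have e2 : (1 + b ^ 2) ^ (-(d:ℝ)/2) = b ^ (-(d:ℝ)) * (1 + b⁻¹ ^ 2) ^ (-(d:ℝ)/2) := by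
    rw [hbr, ← key_id16 hb]
    field_simp
  have hdd : -(d:ℝ)/2 = -((d:ℝ)/2) := by ring
  have hdb := diff_bound16 (p := (d:ℝ)/2) (by
      have : (2:ℝ) ≤ d := by exact_mod_cast hd
      linarith) (by positivity : (0:ℝ) ≤ a⁻¹ ^ 2) (by positivity : (0:ℝ) ≤ b⁻¹ ^ 2)
  rw [e1, e2, ← mul_sub, abs_mul, abs_of_nonneg (Real.rpow_nonneg hb.le _), hdd]
  calc b ^ (-(d:ℝ)) * |(1 + a⁻¹ ^ 2) ^ (-((d:ℝ)/2)) - (1 + b⁻¹ ^ 2) ^ (-((d:ℝ)/2))|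
      ≤ b ^ (-(d:ℝ)) * ((d:ℝ)/2 * (a⁻¹ ^ 2 + b⁻¹ ^ 2)) := by
        gcongr
    _ = ((d:ℝ)/2) * (a⁻¹ ^ 2 + b⁻¹ ^ 2) * b ^ (-(d:ℝ)) := by ring

private lemma summable_pi_prod16 {f : ℤ → ℝ} (hf0 : ∀ m, 0 ≤ f m) (hf : Summable f) :
    ∀ k : ℕ, Summable fun n : Fin k → ℤ => ∏ i, f (n i) := by
  intro k
  induction k with
  | zero => exact Summable.of_finite
  | succ k ih =>
    have hfn : Summable fun m => ‖f m‖ := by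
      simpa [Real.norm_eq_abs, abs_of_nonneg (hf0 _)] using hf
    have hpn : Summable fun n : Fin k → ℤ => ‖∏ i, f (n i)‖ := by
      have : ∀ n : Fin k → ℤ, ‖∏ i, f (n i)‖ = ∏ i, f (n i) := fun n =>
        Real.norm_of_nonneg (Finset.prod_nonneg fun i _ => hf0 _)
      simpa [this] using ih
    have h3 : Summable fun q : ℤ × (Fin k → ℤ) => f q.1 * ∏ i, f (q.2 i) := by
      apply summable_mul_of_summable_norm hfn hpn
    have h4 := (Fin.consEquiv fun _ => ℤ).symm.summable_iff.mpr h3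
    refine h4.congr fun n => ?_
    simp only [Function.comp_apply, Fin.prod_univ_succ]
    rfl

/-- coordinate is dominated by euclidean norm -/
private lemma coord_le_norm16 {d : ℕ} (t : EuclideanSpace ℝ (Fin d)) (i : Fin d) :
    |t i| ≤ ‖t‖ := by
  rw [EuclideanSpace.norm_eq, Real.le_sqrt (abs_nonneg _) (by positivity)]
  calc |t i| ^ 2 = ‖t i‖ ^ 2 := by rw [Real.norm_eq_abs]
    _ ≤ ∑ j, ‖t j‖ ^ 2 := Finset.single_le_sum (f := fun j => ‖t j‖ ^ 2)
        (fun j _ => by positivity) (Finset.mem_univ i)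

set_option maxHeartbeats 1000000 in
theorem stmt16 {d : ℕ} (hd : 2 ≤ d)
    (g : Matrix (Fin d) (Fin d) ℝ) (hg : g.det ≠ 0)
    (h : EuclideanSpace ℝ (Fin d) → ℝ)
    (hh : ∀ t : EuclideanSpace ℝ (Fin d),
      h t = ‖Matrix.toEuclideanLin g t‖ ^ d / ‖t‖ ^ d *
          (1 + ‖Matrix.toEuclideanLin g t‖ ^ 2) ^ (-(d : ℝ) / 2)
        - (1 + ‖t‖ ^ 2) ^ (-(d : ℝ) / 2)) :
    (∃ C R : ℝ, ∀ t : EuclideanSpace ℝ (Fin d), R ≤ ‖t‖ →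
      |h t| ≤ C * ‖t‖ ^ (-(d : ℝ) - 2)) ∧
    (∑' n : Fin d → ℤ,
      essSup (fun t => ENNReal.ofReal |h t|)
        ((volume : Measure (EuclideanSpace ℝ (Fin d))).restrict
          {t : EuclideanSpace ℝ (Fin d) | ∀ i, (n i : ℝ) ≤ t i ∧ t i ≤ (n i : ℝ) + 1}))
      ≠ ⊤ := by
  classical
  have hdR : (0:ℝ) < d := by
    have : 0 < d := by omega
    exact_mod_cast this
  set T : EuclideanSpace ℝ (Fin d) →L[ℝ] EuclideanSpace ℝ (Fin d) :=
    LinearMap.toContinuousLinearMap (Matrix.toEuclideanLin g) with hT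
  set T' : EuclideanSpace ℝ (Fin d) →L[ℝ] EuclideanSpace ℝ (Fin d) :=
    LinearMap.toContinuousLinearMap (Matrix.toEuclideanLin g⁻¹) with hT'
  have hinv : ∀ t : EuclideanSpace ℝ (Fin d),
      Matrix.toEuclideanLin g⁻¹ (Matrix.toEuclideanLin g t) = t := by
    intro t
    have h1 : g⁻¹ * g = 1 := Matrix.nonsing_inv_mul g (Ne.isUnit hg)
    simp [Matrix.toEuclideanLin_apply, Matrix.mulVec_mulVec, h1]
  have hble : ∀ t : EuclideanSpace ℝ (Fin d),
      ‖t‖ ≤ ‖T'‖ * ‖Matrix.toEuclideanLin g t‖ := by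
    intro t
    conv_lhs => rw [← hinv t]
    exact T'.le_opNorm _
  have hale : ∀ t : EuclideanSpace ℝ (Fin d),
      ‖Matrix.toEuclideanLin g t‖ ≤ ‖T‖ * ‖t‖ := fun t => T.le_opNorm t
  have hapos : ∀ t : EuclideanSpace ℝ (Fin d), t ≠ 0 →
      0 < ‖Matrix.toEuclideanLin g t‖ := by
    intro t ht
    by_contra hc
    push_neg at hc
    have h0 : ‖Matrix.toEuclideanLin g t‖ = 0 := le_antisymm hc (norm_nonneg _)
    have h1 := hble t
    rw [h0, mul_zero] at h1
    exact ht (norm_le_zero_iff.mp h1)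
  set C₁ : ℝ := ((d:ℝ)/2) * (‖T'‖^2 + 1) with hC₁
  have hC₁0 : 0 ≤ C₁ := by positivity
  -- pointwise decay bound
  have hptw : ∀ t : EuclideanSpace ℝ (Fin d), t ≠ 0 →
      |h t| ≤ C₁ * ‖t‖ ^ (-(d:ℝ) - 2) := by
    intro t ht
    have hb : 0 < ‖t‖ := norm_pos_iff.mpr ht
    have ha : 0 < ‖Matrix.toEuclideanLin g t‖ := hapos t ht
    set a := ‖Matrix.toEuclideanLin g t‖ with hadef
    set b := ‖t‖ with hbdef
    have hiva : a⁻¹ ≤ ‖T'‖ * b⁻¹ := by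
      have h1 := hble t
      calc a⁻¹ = (b * b⁻¹) * a⁻¹ := by rw [mul_inv_cancel₀ hb.ne', one_mul]
        _ ≤ ((‖T'‖ * a) * b⁻¹) * a⁻¹ := by
            have hb1 : (0:ℝ) ≤ b⁻¹ := by positivity
            have ha1 : (0:ℝ) ≤ a⁻¹ := by positivity
            gcongr
        _ = ‖T'‖ * b⁻¹ * (a * a⁻¹) := by ring
        _ = ‖T'‖ * b⁻¹ := by rw [mul_inv_cancel₀ ha.ne', mul_one]
    have hiva2 : a⁻¹^2 ≤ ‖T'‖^2 * b⁻¹^2 := by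
      calc a⁻¹^2 ≤ (‖T'‖ * b⁻¹)^2 := pow_le_pow_left₀ (by positivity) hiva 2
        _ = ‖T'‖^2 * b⁻¹^2 := by ring
    have hbexp : b⁻¹^2 * b ^ (-(d:ℝ)) = b ^ (-(d:ℝ) - 2) := by
      have h2 : b⁻¹^2 = b ^ (-2:ℝ) := by
        rw [← Real.rpow_neg_one b, ← Real.rpow_natCast (b ^ (-1:ℝ)) 2,
          ← Real.rpow_mul hb.le]
        norm_num
      rw [h2, ← Real.rpow_add hb]
      congr 1
      ring
    rw [hh t]
    refine (core16 hd ha hb).trans ?_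
    calc ((d:ℝ)/2) * (a⁻¹^2 + b⁻¹^2) * b ^ (-(d:ℝ))
        ≤ ((d:ℝ)/2) * ((‖T'‖^2 + 1) * b⁻¹^2) * b ^ (-(d:ℝ)) := by
          have hr : (0:ℝ) ≤ b ^ (-(d:ℝ)) := Real.rpow_nonneg hb.le _
          have hin : a⁻¹^2 + b⁻¹^2 ≤ (‖T'‖^2 + 1) * b⁻¹^2 := by nlinarith [hiva2]
          have hd2 : (0:ℝ) ≤ (d:ℝ)/2 := by positivity
          exact mul_le_mul_of_nonneg_right (mul_le_mul_of_nonneg_left hin hd2) hr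
      _ = C₁ * (b⁻¹^2 * b ^ (-(d:ℝ))) := by rw [hC₁]; ring
      _ = C₁ * b ^ (-(d:ℝ) - 2) := by rw [hbexp]
  -- global bound
  set B : ℝ := ‖T‖^d + 1 with hB
  have hB0 : (0:ℝ) ≤ B := by positivity
  have hglob : ∀ t : EuclideanSpace ℝ (Fin d), |h t| ≤ B := by
    intro t
    rw [hh t]
    set a := ‖Matrix.toEuclideanLin g t‖ with hadef
    set b := ‖t‖ with hbdef
    have ha0 : (0:ℝ) ≤ a := norm_nonneg _
    have hb0 : (0:ℝ) ≤ b := norm_nonneg _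
    have hdneg : -(d:ℝ)/2 ≤ 0 := by
      have : (0:ℝ) ≤ (d:ℝ) := hdR.le
      linarith
    have hP : (0:ℝ) ≤ (1 + a^2) ^ (-(d:ℝ)/2) := Real.rpow_nonneg (by positivity) _
    have hP1 : (1 + a^2) ^ (-(d:ℝ)/2) ≤ 1 :=
      Real.rpow_le_one_of_one_le_of_nonpos (by nlinarith) hdneg
    have hQ : (0:ℝ) ≤ (1 + b^2) ^ (-(d:ℝ)/2) := Real.rpow_nonneg (by positivity) _
    have hQ1 : (1 + b^2) ^ (-(d:ℝ)/2) ≤ 1 :=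
      Real.rpow_le_one_of_one_le_of_nonpos (by nlinarith) hdneg
    have hfrac : a ^ d / b ^ d ≤ ‖T‖ ^ d := by
      rcases eq_or_lt_of_le hb0 with hb | hb
      · have ht : t = 0 := norm_eq_zero.mp hb.symm
        have ha' : a = 0 := by
          rw [hadef, ht, map_zero, norm_zero]
        rw [ha', zero_pow (by omega : d ≠ 0), zero_div]
        positivity
      · rw [div_le_iff₀ (by positivity)]
        calc a ^ d ≤ (‖T‖ * b) ^ d := pow_le_pow_left₀ ha0 (hale t) d
          _ = ‖T‖ ^ d * b ^ d := mul_pow _ _ _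
    have hfrac0 : (0:ℝ) ≤ a ^ d / b ^ d := by positivity
    have fact1 : a ^ d / b ^ d * ((1 + a^2) ^ (-(d:ℝ)/2)) ≤ ‖T‖ ^ d := by
      calc a ^ d / b ^ d * ((1 + a^2) ^ (-(d:ℝ)/2)) ≤ ‖T‖ ^ d * 1 :=
            mul_le_mul hfrac hP1 hP (by positivity)
        _ = ‖T‖ ^ d := mul_one _
    have fact2 : (0:ℝ) ≤ a ^ d / b ^ d * ((1 + a^2) ^ (-(d:ℝ)/2)) :=
      mul_nonneg hfrac0 hP
    rw [abs_sub_le_iff]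
    constructor <;> linarith [fact1, fact2, hQ, hQ1, hB.le, hB.ge]
  -- exponent and one-dimensional summable majorant
  set pp : ℝ := ((d:ℝ)+2)/(d:ℝ) with hppdef
  have hpp1 : 1 < pp := by
    rw [hppdef, lt_div_iff₀ hdR]; linarith
  have hpp0 : (0:ℝ) ≤ pp := by linarith
  have hdpp : (d:ℝ) * pp = (d:ℝ) + 2 := by
    rw [hppdef]; field_simp
  set fz : ℤ → ℝ := fun m => (max 1 |(m:ℝ)|) ^ (-pp) with hfzdef
  have hfz0 : ∀ m, 0 ≤ fz m := fun m =>
    Real.rpow_nonneg (le_trans zero_le_one (le_max_left _ _)) _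
  have hfzsum : Summable fz := by
    have h1 : Summable (Function.update (fun m : ℤ => |(m:ℝ)| ^ (-pp)) 0 1) :=
      (Real.summable_abs_int_rpow hpp1).update 0 1
    refine h1.congr fun m => ?_
    rcases eq_or_ne m 0 with rfl | hm
    · simp [hfzdef]
    · rw [Function.update_of_ne hm, hfzdef]
      have h2 : (1:ℝ) ≤ |(m:ℝ)| := by
        rw [← Int.cast_abs]
        exact_mod_cast Int.one_le_abs (by exact_mod_cast hm)
      simp [max_eq_right h2]
  set C₃ : ℝ := (B + C₁) * (4:ℝ) ^ ((d:ℝ)+2) with hC₃def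
  have h4pos : (0:ℝ) < (4:ℝ) ^ ((d:ℝ)+2) := Real.rpow_pos_of_pos (by norm_num) _
  have hC₃0 : 0 ≤ C₃ := mul_nonneg (by linarith) h4pos.le
  -- bound on each cube
  have hcube : ∀ (n : Fin d → ℤ) (t : EuclideanSpace ℝ (Fin d)),
      (∀ i, (n i:ℝ) ≤ t i ∧ t i ≤ (n i:ℝ)+1) →
      |h t| ≤ C₃ * (∏ i, max 1 |((n i):ℝ)|) ^ (-pp) := by
    intro n t ht
    set M := ∏ i, max 1 |((n i):ℝ)| with hMdef
    have hM1 : (1:ℝ) ≤ M := by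
      calc (1:ℝ) = ∏ _i : Fin d, (1:ℝ) := by simp
        _ ≤ M := Finset.prod_le_prod (fun i _ => zero_le_one) (fun i _ => le_max_left _ _)
    have hM0 : (0:ℝ) < M := lt_of_lt_of_le one_pos hM1
    have hMneg : M ^ (-pp) = (M ^ pp)⁻¹ := Real.rpow_neg hM0.le _
    have hMpp0 : (0:ℝ) < M ^ pp := Real.rpow_pos_of_pos hM0 _
    obtain ⟨i₀, -, hi₀⟩ := Finset.exists_max_image Finset.univ
      (fun i => |((n i):ℝ)|) ⟨(⟨0, by omega⟩ : Fin d), Finset.mem_univ _⟩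
    have hKmax : ∀ i, |((n i):ℝ)| ≤ |((n i₀):ℝ)| := fun i => hi₀ i (Finset.mem_univ i)
    by_cases hK3 : |((n i₀):ℝ)| ≤ 3
    · -- small cubes: use the global bound
      have hMle : M ≤ (4:ℝ) ^ ((d:ℝ)) := by
        calc M ≤ ∏ _i : Fin d, (4:ℝ) :=
              Finset.prod_le_prod (fun i _ => le_trans zero_le_one (le_max_left _ _))
                (fun i _ => max_le (by norm_num) (by linarith [hKmax i]))
          _ = (4:ℝ) ^ d := by rw [Finset.prod_const, Finset.card_univ, Fintype.card_fin]
          _ = (4:ℝ) ^ ((d:ℝ)) := (Real.rpow_natCast 4 d).symm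
      have hMpple : M ^ pp ≤ (4:ℝ) ^ ((d:ℝ)+2) := by
        calc M ^ pp ≤ ((4:ℝ) ^ ((d:ℝ))) ^ pp := Real.rpow_le_rpow hM0.le hMle hpp0
          _ = 4 ^ ((d:ℝ)*pp) := by rw [← Real.rpow_mul (by norm_num)]
          _ = (4:ℝ) ^ ((d:ℝ)+2) := by rw [hdpp]
      calc |h t| ≤ B := hglob t
        _ ≤ C₃ * M ^ (-pp) := by
          rw [hMneg, hC₃def]
          have h4 : B * (M ^ pp) ≤ (B + C₁) * (4:ℝ) ^ ((d:ℝ)+2) :=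
            mul_le_mul (by linarith) hMpple hMpp0.le (by linarith)
          calc B = B * (M^pp) * (M^pp)⁻¹ := by field_simp
            _ ≤ ((B+C₁) * (4:ℝ) ^ ((d:ℝ)+2)) * (M^pp)⁻¹ := by gcongr
    · -- large cubes: use the decay bound
      push_neg at hK3
      have hti : |((n i₀):ℝ)| - 1 ≤ |t i₀| := by
        rcases ht i₀ with ⟨h1, h2⟩
        rcases abs_cases ((n i₀ : ℝ)) with ⟨e1, e2⟩ | ⟨e1, e2⟩ <;>
          rcases abs_cases (t i₀) with ⟨f1, f2⟩ | ⟨f1, f2⟩ <;> linarith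
      have hbK : |((n i₀):ℝ)| - 1 ≤ ‖t‖ := le_trans hti (coord_le_norm16 t i₀)
      have hbpos : (0:ℝ) < ‖t‖ := by linarith
      have ht0 : t ≠ 0 := by
        intro h0
        rw [h0, norm_zero] at hbpos
        exact lt_irrefl _ hbpos
      have hK4b : |((n i₀):ℝ)| ≤ (4:ℝ) * ‖t‖ := by linarith
      have hMleK : M ≤ |((n i₀):ℝ)| ^ ((d:ℝ)) := by
        have hK1 : (1:ℝ) ≤ |((n i₀):ℝ)| := by linarith
        calc M ≤ ∏ _i : Fin d, |((n i₀):ℝ)| :=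
              Finset.prod_le_prod (fun i _ => le_trans zero_le_one (le_max_left _ _))
                (fun i _ => max_le hK1 (hKmax i))
          _ = |((n i₀):ℝ)| ^ d := by rw [Finset.prod_const, Finset.card_univ, Fintype.card_fin]
          _ = |((n i₀):ℝ)| ^ ((d:ℝ)) := (Real.rpow_natCast _ d).symm
      have hMppleb : M ^ pp ≤ (4:ℝ) ^ ((d:ℝ)+2) * ‖t‖ ^ ((d:ℝ)+2) := by
        calc M ^ pp ≤ (|((n i₀):ℝ)| ^ ((d:ℝ))) ^ pp := Real.rpow_le_rpow hM0.le hMleK hpp0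
          _ = |((n i₀):ℝ)| ^ ((d:ℝ)+2) := by
              rw [← Real.rpow_mul (abs_nonneg _), hdpp]
          _ ≤ ((4:ℝ) * ‖t‖) ^ ((d:ℝ)+2) :=
              Real.rpow_le_rpow (abs_nonneg _) hK4b (by linarith)
          _ = (4:ℝ) ^ ((d:ℝ)+2) * ‖t‖ ^ ((d:ℝ)+2) := Real.mul_rpow (by norm_num) hbpos.le
      have hbrpow : ‖t‖ ^ (-(d:ℝ) - 2) = (‖t‖ ^ ((d:ℝ)+2))⁻¹ := by
        rw [show -(d:ℝ) - 2 = -((d:ℝ)+2) by ring, Real.rpow_neg hbpos.le]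
      have hbp : (0:ℝ) < ‖t‖ ^ ((d:ℝ)+2) := Real.rpow_pos_of_pos hbpos _
      calc |h t| ≤ C₁ * ‖t‖ ^ (-(d:ℝ) - 2) := hptw t ht0
        _ ≤ C₃ * M ^ (-pp) := by
          rw [hbrpow, hMneg, hC₃def]
          have hinv2 : ((4:ℝ) ^ ((d:ℝ)+2) * ‖t‖ ^ ((d:ℝ)+2))⁻¹ ≤ (M ^ pp)⁻¹ :=
            inv_anti₀ hMpp0 hMppleb
          calc C₁ * (‖t‖ ^ ((d:ℝ)+2))⁻¹
              = C₁ * (4:ℝ) ^ ((d:ℝ)+2) * ((4:ℝ) ^ ((d:ℝ)+2) * ‖t‖ ^ ((d:ℝ)+2))⁻¹ := by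
                field_simp
            _ ≤ C₁ * (4:ℝ) ^ ((d:ℝ)+2) * (M ^ pp)⁻¹ :=
                mul_le_mul_of_nonneg_left hinv2 (mul_nonneg hC₁0 h4pos.le)
            _ ≤ ((B + C₁) * (4:ℝ) ^ ((d:ℝ)+2)) * (M ^ pp)⁻¹ := by
                have : C₁ * (4:ℝ) ^ ((d:ℝ)+2) ≤ (B + C₁) * (4:ℝ) ^ ((d:ℝ)+2) :=
                  mul_le_mul_of_nonneg_right (by linarith) h4pos.le
                exact mul_le_mul_of_nonneg_right this (by positivity)
  -- measurability of the cubes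
  have hmeas : ∀ n : Fin d → ℤ, MeasurableSet
      {t : EuclideanSpace ℝ (Fin d) | ∀ i, (n i : ℝ) ≤ t i ∧ t i ≤ (n i : ℝ) + 1} := by
    intro n
    have he : {t : EuclideanSpace ℝ (Fin d) | ∀ i, (n i : ℝ) ≤ t i ∧ t i ≤ (n i : ℝ) + 1}
        = ⋂ i, (EuclideanSpace.proj i) ⁻¹' (Set.Icc (n i : ℝ) ((n i : ℝ) + 1)) := by
      ext t; simp [Set.mem_iInter, Set.mem_Icc]
    rw [he]
    exact MeasurableSet.iInter fun i =>
      ((EuclideanSpace.proj (𝕜 := ℝ) i).continuous.measurable) measurableSet_Icc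
  -- summability of the majorant
  have hsum2 : Summable fun n : Fin d → ℤ => C₃ * (∏ i, max 1 |((n i):ℝ)|) ^ (-pp) := by
    refine Summable.mul_left C₃ ?_
    refine (summable_pi_prod16 hfz0 hfzsum d).congr fun n => ?_
    rw [hfzdef]
    exact Real.finset_prod_rpow Finset.univ _
      (fun i _ => le_trans zero_le_one (le_max_left _ _)) (-pp)
  have hbnd0 : ∀ n : Fin d → ℤ, 0 ≤ C₃ * (∏ i, max 1 |((n i):ℝ)|) ^ (-pp) := fun n =>
    mul_nonneg hC₃0 (Real.rpow_nonneg (Finset.prod_nonneg fun i _ =>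
      le_trans zero_le_one (le_max_left _ _)) _)
  constructor
  · refine ⟨C₁, 1, fun t ht => hptw t ?_⟩
    rintro rfl
    rw [norm_zero] at ht
    linarith
  · have hbnd : ∀ n : Fin d → ℤ,
        essSup (fun t => ENNReal.ofReal |h t|)
          ((volume : Measure (EuclideanSpace ℝ (Fin d))).restrict
            {t : EuclideanSpace ℝ (Fin d) | ∀ i, (n i : ℝ) ≤ t i ∧ t i ≤ (n i : ℝ) + 1})
          ≤ ENNReal.ofReal (C₃ * (∏ i, max 1 |((n i):ℝ)|) ^ (-pp)) := by
      intro n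
      refine essSup_le_of_ae_le _ ?_
      refine (ae_restrict_iff' (hmeas n)).2 (ae_of_all _ fun t htmem => ?_)
      exact ENNReal.ofReal_le_ofReal (hcube n t htmem)
    refine ne_top_of_le_ne_top ?_ (ENNReal.tsum_le_tsum hbnd)
    rw [← ENNReal.ofReal_tsum_of_nonneg hbnd0 hsum2]
    exact ENNReal.ofReal_ne_top
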